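/- arXiv:1811.10371 — 2 statements merged into one kernel-verified Lean document; each statement's English description precedes it below -/
import Mathlib

section
/- Let Θ₁, …, Θ_G ∈ ℂ^{N×N} be Hermitian positive semidefinite matrices with Θ_g Θ_{g'} = 0 for all g ≠ g', let c₁, …, c_G ≥ 0 and μ > 0, and set M = Σ_{g=1}^G c_g Θ_g + μ I_N. Then M is invertible, Θ_g M^{-1} Θ_{g'} = 0 for all g ≠ g', and in particular Tr( Θ_g M^{-1} Θ_{g'} M^{-1} ) = 0 for all g ≠ g'. -/
open Matrix
open scoped ComplexOrder

lemma psd_real_smul {n : ℕ} {A : Matrix (Fin n) (Fin n) ℂ} (hA : A.PosSemidef)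
    {c : ℝ} (hc : 0 ≤ c) : ((c : ℂ) • A).PosSemidef := by
  refine ⟨?_, fun x => ?_⟩
  · simp [Matrix.IsHermitian, Matrix.conjTranspose_smul, hA.1.eq]
  · exact (hA.smul (show (0 : ℂ) ≤ (c : ℂ) by exact_mod_cast hc)).2 x

lemma pd_smul_one {n : ℕ} {μ : ℝ} (hμ : 0 < μ) :
    ((μ : ℂ) • (1 : Matrix (Fin n) (Fin n) ℂ)).PosDef := by
  have h : (μ : ℂ) • (1 : Matrix (Fin n) (Fin n) ℂ) = diagonal (fun _ => (μ : ℂ)) := by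
    ext i j
    by_cases hij : i = j <;> simp [hij, Matrix.one_apply, Matrix.diagonal_apply]
  rw [h, Matrix.posDef_diagonal_iff]
  intro i; exact_mod_cast hμ

/-- **Vanishing cross-group coupling for orthogonal groups.**
Let `Θ₁, …, Θ_G ∈ ℂ^{N×N}` be Hermitian positive semidefinite with `Θ_g Θ_{g'} = 0` for
`g ≠ g'`, let `c_g ≥ 0` and `μ > 0`, and set `M = Σ_g c_g Θ_g + μ I_N`. Then `M` is
invertible, `Θ_g M⁻¹ Θ_{g'} = 0` for `g ≠ g'`, and in particular
`Tr(Θ_g M⁻¹ Θ_{g'} M⁻¹) = 0` for `g ≠ g'`. -/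
theorem stmt14 {N G : ℕ} (Θ : Fin G → Matrix (Fin N) (Fin N) ℂ)
    (hΘ : ∀ g, (Θ g).PosSemidef)
    (horth : ∀ g g', g ≠ g' → Θ g * Θ g' = 0)
    (c : Fin G → ℝ) (hc : ∀ g, 0 ≤ c g) (μ : ℝ) (hμ : 0 < μ) :
    IsUnit (∑ g, (c g : ℂ) • Θ g + (μ : ℂ) • (1 : Matrix (Fin N) (Fin N) ℂ)).det ∧
    ∀ g g', g ≠ g' →
      Θ g * (∑ g'', (c g'' : ℂ) • Θ g'' + (μ : ℂ) • 1)⁻¹ * Θ g' = 0 ∧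
      (Θ g * (∑ g'', (c g'' : ℂ) • Θ g'' + (μ : ℂ) • 1)⁻¹ * Θ g'
        * (∑ g'', (c g'' : ℂ) • Θ g'' + (μ : ℂ) • 1)⁻¹).trace = 0 := by
  set M : Matrix (Fin N) (Fin N) ℂ := ∑ g, (c g : ℂ) • Θ g + (μ : ℂ) • 1 with hM
  have hsum : (∑ g, (c g : ℂ) • Θ g).PosSemidef :=
    Finset.sum_induction _ Matrix.PosSemidef (fun a b ha hb => ha.add hb)
      Matrix.PosSemidef.zero (fun g _ => psd_real_smul (hΘ g) (hc g))
  have hMpd : M.PosDef := Matrix.PosDef.posSemidef_add hsum (pd_smul_one hμ)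
  have hMunit : IsUnit M.det := hMpd.det_pos.ne'.isUnit
  refine ⟨hMunit, fun g g' hgg' => ?_⟩
  set B : Matrix (Fin N) (Fin N) ℂ := (c g : ℂ) • Θ g + (μ : ℂ) • 1 with hB
  have hBpd : B.PosDef :=
    Matrix.PosDef.posSemidef_add (psd_real_smul (hΘ g) (hc g)) (pd_smul_one hμ)
  have hBunit : IsUnit B.det := hBpd.det_pos.ne'.isUnit
  have hkey : Θ g * M = B * Θ g := by
    rw [hM, hB, Matrix.mul_add, Matrix.add_mul, Finset.mul_sum]
    congr 1
    · rw [Finset.sum_eq_single g]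
      · rw [Matrix.mul_smul, Matrix.smul_mul]
      · intro b _ hb
        rw [Matrix.mul_smul, horth g b (Ne.symm hb), smul_zero]
      · simp
    · rw [Matrix.mul_smul, Matrix.smul_mul, Matrix.mul_one, Matrix.one_mul]
  have hinv : Θ g * M⁻¹ = B⁻¹ * Θ g :=
    calc Θ g * M⁻¹ = B⁻¹ * B * (Θ g * M⁻¹) := by
          rw [Matrix.nonsing_inv_mul _ hBunit, Matrix.one_mul]
      _ = B⁻¹ * (Θ g * M) * M⁻¹ := by rw [hkey]; noncomm_ring
      _ = B⁻¹ * Θ g * (M * M⁻¹) := by noncomm_ring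
      _ = B⁻¹ * Θ g := by rw [Matrix.mul_nonsing_inv _ hMunit, Matrix.mul_one]
  have h0 : Θ g * M⁻¹ * Θ g' = 0 := by
    rw [hinv, Matrix.mul_assoc, horth g g' hgg', Matrix.mul_zero]
  exact ⟨h0, by rw [h0, Matrix.zero_mul, Matrix.trace_zero]⟩
end

section
/- Suppose positive reals ( η_{b,g} ), for b ∈ {1,…,L} and g ∈ 𝒜_b, satisfy η_{b,g} = (1/N) Tr( Θ_{b,g} T_{b,g} ) with T_{b,g} = ( (1/N) Σ_{j∈𝒢_{b,g}} γ_j a²_{b,j} Θ_{b,g} / ( a²_{b_j,j} η_{b_j,g_j} + γ_j a²_{b,j} η_{b,g} ) + μ_b I_N )^{-1}. Then the values m_{b,i} := a²_{b,i} η_{b,g(b,i)} constitute a solution of the full fixed-point system (FP). -/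
open Matrix
open scoped ComplexOrder

lemma psd_real_smul_s15 {n : Type*} [Fintype n] {M : Matrix n n ℂ} (hM : M.PosSemidef)
    {c : ℝ} (hc : 0 ≤ c) : ((c : ℂ) • M).PosSemidef := by
  constructor
  · unfold Matrix.IsHermitian
    rw [conjTranspose_smul, hM.1.eq]
    simp [Complex.conj_ofReal]
  · intro x
    have h := mul_nonneg (show (0 : ℂ) ≤ (c : ℂ) by exact_mod_cast Complex.zero_le_real.2 hc) (hM.2 x)
    simp only [Matrix.smul_apply, smul_eq_mul]
    convert h using 1
    simp only [Finsupp.sum, Finset.mul_sum]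
    exact Finset.sum_congr rfl fun i _ => Finset.sum_congr rfl fun j _ => by ring

lemma psd_sum {n : Type*} [Fintype n] {ι : Type*} (s : Finset ι)
    (f : ι → Matrix n n ℂ) (hf : ∀ i ∈ s, (f i).PosSemidef) :
    (∑ i ∈ s, f i).PosSemidef := by
  classical
  induction s using Finset.induction_on with
  | empty => simpa using Matrix.PosSemidef.zero
  | insert _ _ hnotmem ih =>
    rw [Finset.sum_insert hnotmem]
    exact Matrix.PosSemidef.add (hf _ (Finset.mem_insert_self _ _))
      (ih fun i hi => hf i (Finset.mem_insert_of_mem hi))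

lemma pd_smul_one_s15 {n : Type*} [Fintype n] [DecidableEq n] {c : ℝ} (hc : 0 < c) :
    ((c : ℂ) • (1 : Matrix n n ℂ)).PosDef := by
  rw [smul_one_eq_diagonal]
  exact Matrix.posDef_diagonal_iff.2 fun i => by exact_mod_cast Complex.zero_lt_real.2 hc


/-- **Group-specific fixed points solve the full system (grouped users).**
If positive reals `η_{b,g}` (for each BS `b` and each group `g ∈ 𝒜_b`, i.e. each group in
the range of the assignment `gA b`) satisfy
`η_{b,g} = (1/N) Tr( Θ_{b,g} T_{b,g} )` with
`T_{b,g} = ( (1/N) Σ_{j∈𝒢_{b,g}} γ_j a²_{b,j} Θ_{b,g} / (a²_{b_j,j} η_{b_j,g_j} + γ_j a²_{b,j} η_{b,g}) + μ_b I_N )⁻¹`,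
then `m_{b,i} := a²_{b,i} η_{b,g(b,i)}` solves the full fixed-point system (FP):
`m_{b,i} = Tr( a²_{b,i} Θ_{b,g(b,i)} ( Σ_j γ_j a²_{b,j} Θ_{b,g(b,j)} / (m_{b_j,j} + γ_j m_{b,j}) + μ_b N I_N )⁻¹ )`. -/
theorem stmt15 {L K N : ℕ} {Gt : Type*} [Fintype Gt] [DecidableEq Gt]
    (bk : Fin K → Fin L) (gA : Fin L → Fin K → Gt)
    (Θ : Fin L → Gt → Matrix (Fin N) (Fin N) ℂ)
    (hΘ : ∀ b g, (Θ b g).PosSemidef) (hΘne : ∀ b g, Θ b g ≠ 0)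
    (horth : ∀ b g g', g ≠ g' → Θ b g * Θ b g' = 0)
    (a : Fin L → Fin K → ℝ) (ha : ∀ b k, 0 < a b k)
    (γ : Fin K → ℝ) (hγ : ∀ k, 0 < γ k) (μ : Fin L → ℝ) (hμ : ∀ b, 0 < μ b)
    (η : Fin L → Gt → ℝ)
    (hηpos : ∀ (b : Fin L) (j : Fin K), 0 < η b (gA b j))
    (hηeq : ∀ (b : Fin L) (j : Fin K),
      η b (gA b j) = (1 / (N : ℝ)) *
        (Matrix.trace (Θ b (gA b j) *
          ((((1 : ℝ) / (N : ℝ) : ℝ) : ℂ) •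
            (∑ j' ∈ Finset.univ.filter (fun j' => gA b j' = gA b j),
              ((γ j' * a b j' ^ 2 /
                  (a (bk j') j' ^ 2 * η (bk j') (gA (bk j') j') +
                    γ j' * a b j' ^ 2 * η b (gA b j)) : ℝ) : ℂ) • Θ b (gA b j)) +
            ((μ b : ℝ) : ℂ) • (1 : Matrix (Fin N) (Fin N) ℂ))⁻¹)).re) :
    ∀ (b : Fin L) (i : Fin K),
      a b i ^ 2 * η b (gA b i) =
        (Matrix.trace (((a b i ^ 2 : ℝ) : ℂ) • Θ b (gA b i) *
          ((∑ j, ((γ j * a b j ^ 2 /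
              ((a (bk j) j ^ 2 * η (bk j) (gA (bk j) j)) +
                γ j * (a b j ^ 2 * η b (gA b j))) : ℝ) : ℂ) • Θ b (gA b j)) +
            ((μ b * (N : ℝ) : ℝ) : ℂ) • (1 : Matrix (Fin N) (Fin N) ℂ))⁻¹)).re := by
  intro b i
  -- dispose of N = 0
  rcases Nat.eq_zero_or_pos N with hN | hN
  · exfalso
    have h1 := hηpos b i
    have h2 := hηeq b i
    have hz : (1 : ℝ) / (N : ℝ) = 0 := by rw [hN]; simp
    rw [hz, zero_mul] at h2
    rw [h2] at h1
    exact lt_irrefl _ h1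
  have hNR : (0 : ℝ) < (N : ℝ) := by exact_mod_cast hN
  -- coefficients
  set c : Fin K → ℝ := fun j => γ j * a b j ^ 2 /
      ((a (bk j) j ^ 2 * η (bk j) (gA (bk j) j)) +
        γ j * (a b j ^ 2 * η b (gA b j))) with hc_def
  have hcpos : ∀ j, 0 ≤ c j := by
    intro j
    apply div_nonneg
    · exact le_of_lt (mul_pos (hγ j) (pow_pos (ha b j) 2))
    · have h1 : 0 < a (bk j) j ^ 2 * η (bk j) (gA (bk j) j) :=
        mul_pos (pow_pos (ha _ _) 2) (hηpos _ _)
      have h2 : 0 < γ j * (a b j ^ 2 * η b (gA b j)) :=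
        mul_pos (hγ j) (mul_pos (pow_pos (ha _ _) 2) (hηpos _ _))
      linarith
  set g := gA b i with hg
  set P : Fin K → Prop := fun j => gA b j = g with hP
  set M : Fin K → Matrix (Fin N) (Fin N) ℂ := fun j => (↑(c j) : ℂ) • Θ b (gA b j) with hM
  set ν : ℂ := ((μ b * (N : ℝ) : ℝ) : ℂ) with hν
  set S1 : Matrix (Fin N) (Fin N) ℂ := ∑ j ∈ Finset.univ.filter P, M j with hS1
  set C : Matrix (Fin N) (Fin N) ℂ := ∑ j ∈ Finset.univ.filter (fun j => ¬ P j), M j with hC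
  have hsplit : (∑ j, M j) = S1 + C := (Finset.sum_filter_add_sum_filter_not _ _ _).symm
  set A : Matrix (Fin N) (Fin N) ℂ := (∑ j, M j) + ν • 1 with hA
  set B : Matrix (Fin N) (Fin N) ℂ := S1 + ν • 1 with hB
  -- PSD facts
  have hMpsd : ∀ j, (M j).PosSemidef := fun j => psd_real_smul_s15 (hΘ _ _) (hcpos j)
  have hApd : A.PosDef := by
    refine Matrix.PosDef.posSemidef_add (psd_sum _ _ fun j _ => hMpsd j) ?_
    exact pd_smul_one_s15 (mul_pos (hμ b) hNR)
  have hBpd : B.PosDef := by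
    refine Matrix.PosDef.posSemidef_add (psd_sum _ _ fun j _ => hMpsd j) ?_
    exact pd_smul_one_s15 (mul_pos (hμ b) hNR)
  have hAdet : IsUnit A.det := (Matrix.isUnit_iff_isUnit_det _).1 hApd.isUnit
  have hBdet : IsUnit B.det := (Matrix.isUnit_iff_isUnit_det _).1 hBpd.isUnit
  -- orthogonality facts
  have hΘC : Θ b g * C = 0 := by
    rw [hC, Finset.mul_sum]
    refine Finset.sum_eq_zero fun j hj => ?_
    rw [Finset.mem_filter] at hj
    rw [hM, mul_smul_comm, horth b g (gA b j) (fun h => hj.2 h.symm), smul_zero]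
  have hCΘ : C * Θ b g = 0 := by
    rw [hC, Finset.sum_mul]
    refine Finset.sum_eq_zero fun j hj => ?_
    rw [Finset.mem_filter] at hj
    rw [hM, smul_mul_assoc, horth b (gA b j) g hj.2, smul_zero]
  have hS1comm : Θ b g * S1 = S1 * Θ b g := by
    rw [hS1, Finset.mul_sum, Finset.sum_mul]
    refine Finset.sum_congr rfl fun j hj => ?_
    rw [Finset.mem_filter] at hj
    have hgj : gA b j = g := hj.2
    simp only [hM]
    rw [hgj, mul_smul_comm, smul_mul_assoc]
  have hkey : Θ b g * A = B * Θ b g := by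
    rw [hA, hB, hsplit]
    rw [mul_add, mul_add, add_mul, hΘC, hS1comm]
    simp [mul_smul_comm, smul_mul_assoc]
  have hinv : Θ b g * A⁻¹ = B⁻¹ * Θ b g := by
    have h1 : B⁻¹ * (Θ b g * A) * A⁻¹ = B⁻¹ * (B * Θ b g) * A⁻¹ := by rw [hkey]
    rw [mul_assoc (B⁻¹) _ (A⁻¹), mul_assoc (Θ b g) A (A⁻¹), Matrix.mul_nonsing_inv _ hAdet,
      mul_one, ← mul_assoc B⁻¹ B _, Matrix.nonsing_inv_mul _ hBdet, one_mul] at h1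
    exact h1.symm
  -- relate B⁻¹ to the group matrix
  set D : Matrix (Fin N) (Fin N) ℂ := (((1 : ℝ) / (N : ℝ) : ℝ) : ℂ) • S1 + ((μ b : ℝ) : ℂ) • 1
    with hD
  have hNne : ((N : ℝ) : ℂ) ≠ 0 := by exact_mod_cast hNR.ne'
  have hBD : B = ((N : ℝ) : ℂ) • D := by
    rw [hD, hB, smul_add, smul_smul, smul_smul]
    congr 1
    · rw [show ((N : ℝ) : ℂ) * (((1 : ℝ) / (N : ℝ) : ℝ) : ℂ) = 1 by
        push_cast; field_simp, one_smul]
    · rw [hν]; push_cast; ring_nf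
  have hDdet : IsUnit D.det := by
    have : D = (((N : ℝ) : ℂ)⁻¹) • B := by
      rw [hBD, smul_smul, inv_mul_cancel₀ hNne, one_smul]
    rw [this, Matrix.det_smul]
    exact (IsUnit.pow _ (isUnit_iff_ne_zero.2 (inv_ne_zero hNne))).mul hBdet
  have hBinv : B⁻¹ = (((N : ℝ) : ℂ)⁻¹) • D⁻¹ := by
    apply Matrix.inv_eq_right_inv
    rw [hBD, Matrix.smul_mul, Matrix.mul_smul, smul_smul, mul_inv_cancel₀ hNne, one_smul,
      Matrix.mul_nonsing_inv _ hDdet]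
  -- the sum in hηeq equals S1
  have hsum_eq : (∑ j' ∈ Finset.univ.filter (fun j' => gA b j' = gA b i),
      ((γ j' * a b j' ^ 2 /
          (a (bk j') j' ^ 2 * η (bk j') (gA (bk j') j') +
            γ j' * a b j' ^ 2 * η b (gA b i)) : ℝ) : ℂ) • Θ b (gA b i)) = S1 := by
    rw [hS1]
    refine Finset.sum_congr rfl fun j hj => ?_
    rw [Finset.mem_filter] at hj
    have hgj : gA b j = g := hj.2
    simp only [hM]
    rw [hgj]
    congr 1
    rw [hc_def]
    simp only
    rw [hgj]
    norm_cast
    ring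
  -- final computation
  have hηi := hηeq b i
  rw [hsum_eq, ← hD] at hηi
  have htr : Matrix.trace (((a b i ^ 2 : ℝ) : ℂ) • Θ b g * A⁻¹)
      = ((a b i ^ 2 : ℝ) : ℂ) * ((((N : ℝ) : ℂ)⁻¹) * Matrix.trace (Θ b g * D⁻¹)) := by
    rw [Matrix.smul_mul, Matrix.trace_smul, hinv, Matrix.trace_mul_comm, hBinv,
      Matrix.mul_smul, Matrix.trace_smul]
    simp [smul_eq_mul]
  rw [htr]
  have hc1 : (((N : ℝ) : ℂ)⁻¹) = ((1 / (N : ℝ) : ℝ) : ℂ) := by push_cast; ring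
  rw [hc1, Complex.re_ofReal_mul, Complex.re_ofReal_mul, hηi]
end
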